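/- With a ∈ ℝ \ {0, ±1}, G(z) = z² and G∗(z) = z(z + a)/(az + 1), the Hopf differential Q = −dG·dG∗/(G − G∗)² equals −2(az² + 2z + a)/(a²·z·(z + 1)²·(z − 1)²) dz², which has a pole of order 1 at z = 0 and poles of order 2 at z = 1 and z = −1. -/

import Mathlib

open Filter Topology

/-- for a ∈ ℝ \ {0, ±1}, G(z) = z², G∗(z) = z(z + a)/(az + 1),
dG = 2z dz, dG∗ = (az² + 2z + a)/(az + 1)² dz, the Hopf differential
Q = −dG·dG∗/(G − G∗)² equals −2(az² + 2z + a)/(a² z (z + 1)² (z − 1)²) dz²,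
with a pole of order 1 at z = 0 and poles of order 2 at z = ±1. -/
theorem stmt10 (a : ℝ) (ha : a ≠ 0) (ha1 : a ≠ 1) (ha2 : a ≠ -1) :
    (∀ z : ℂ, z ≠ 0 → z ≠ 1 → z ≠ -1 → (a : ℂ) * z + 1 ≠ 0 →
      -((2 * z) * (((a : ℂ) * z ^ 2 + 2 * z + (a : ℂ)) / ((a : ℂ) * z + 1) ^ 2))
          / (z ^ 2 - z * (z + (a : ℂ)) / ((a : ℂ) * z + 1)) ^ 2
        = -(2 * ((a : ℂ) * z ^ 2 + 2 * z + (a : ℂ)))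
            / ((a : ℂ) ^ 2 * z * (z + 1) ^ 2 * (z - 1) ^ 2)) ∧
    (∃ c : ℂ, c ≠ 0 ∧
      Tendsto (fun z : ℂ => z *
        (-(2 * ((a : ℂ) * z ^ 2 + 2 * z + (a : ℂ)))
          / ((a : ℂ) ^ 2 * z * (z + 1) ^ 2 * (z - 1) ^ 2))) (𝓝[≠] 0) (𝓝 c)) ∧
    (∃ c : ℂ, c ≠ 0 ∧
      Tendsto (fun z : ℂ => (z - 1) ^ 2 *
        (-(2 * ((a : ℂ) * z ^ 2 + 2 * z + (a : ℂ)))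
          / ((a : ℂ) ^ 2 * z * (z + 1) ^ 2 * (z - 1) ^ 2))) (𝓝[≠] 1) (𝓝 c)) ∧
    (∃ c : ℂ, c ≠ 0 ∧
      Tendsto (fun z : ℂ => (z + 1) ^ 2 *
        (-(2 * ((a : ℂ) * z ^ 2 + 2 * z + (a : ℂ)))
          / ((a : ℂ) ^ 2 * z * (z + 1) ^ 2 * (z - 1) ^ 2))) (𝓝[≠] (-1)) (𝓝 c)) := by
  have haC : (a : ℂ) ≠ 0 := Complex.ofReal_ne_zero.mpr ha
  refine ⟨?_, ?_, ?_, ?_⟩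
  · intro z hz0 hz1 hz2 hd
    have h1 : z - 1 ≠ 0 := sub_ne_zero.mpr hz1
    have h2 : z + 1 ≠ 0 := by
      intro h; exact hz2 (by linear_combination h)
    have key : z ^ 2 - z * (z + (a : ℂ)) / ((a : ℂ) * z + 1)
        = (a : ℂ) * z * (z - 1) * (z + 1) / ((a : ℂ) * z + 1) := by
      rw [eq_div_iff hd, sub_mul, div_mul_cancel₀ _ hd]; ring
    have hd2 : ((a : ℂ) * z + 1) ^ 2 ≠ 0 := pow_ne_zero _ hd
    have hM : (a : ℂ) * z * (z - 1) * (z + 1) ≠ 0 := by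
      exact mul_ne_zero (mul_ne_zero (mul_ne_zero haC hz0) h1) h2
    rw [key, div_pow,
      show -((2 * z) * (((a : ℂ) * z ^ 2 + 2 * z + (a : ℂ)) / ((a : ℂ) * z + 1) ^ 2))
        = (-(2 * z * ((a : ℂ) * z ^ 2 + 2 * z + (a : ℂ)))) / ((a : ℂ) * z + 1) ^ 2 by ring,
      div_div_div_cancel_right₀ hd2]
    rw [div_eq_div_iff (pow_ne_zero _ hM) (by
      exact mul_ne_zero (mul_ne_zero (mul_ne_zero (pow_ne_zero _ haC) hz0)
        (pow_ne_zero _ h2)) (pow_ne_zero _ h1))]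
    ring
  · refine ⟨-2 / (a : ℂ), div_ne_zero (by norm_num) haC, ?_⟩
    set g : ℂ → ℂ := fun z => -(2 * ((a : ℂ) * z ^ 2 + 2 * z + (a : ℂ)))
        / ((a : ℂ) ^ 2 * (z + 1) ^ 2 * (z - 1) ^ 2) with hgdef
    have hc : ContinuousAt g 0 := by
      apply ContinuousAt.div (by fun_prop) (by fun_prop)
      norm_num [haC]
    have hg : Tendsto g (𝓝[≠] (0 : ℂ)) (𝓝 (g 0)) :=
      hc.tendsto.mono_left nhdsWithin_le_nhds
    have hval : g 0 = -2 / (a : ℂ) := by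
      simp only [hgdef]
      norm_num
      field_simp
    rw [hval] at hg
    refine Tendsto.congr' ?_ hg
    have e1 : ∀ᶠ z : ℂ in 𝓝 0, z + 1 ≠ 0 :=
      (continuousAt_id.add continuousAt_const).eventually_ne (by norm_num)
    have e2 : ∀ᶠ z : ℂ in 𝓝 0, z - 1 ≠ 0 :=
      (continuousAt_id.sub continuousAt_const).eventually_ne (by norm_num)
    filter_upwards [self_mem_nhdsWithin, eventually_nhdsWithin_of_eventually_nhds e1,
      eventually_nhdsWithin_of_eventually_nhds e2] with z hz0 h1 h2
    have hz0 : z ≠ 0 := hz0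
    have hD : (a : ℂ) ^ 2 * z * (z + 1) ^ 2 * (z - 1) ^ 2 ≠ 0 :=
      mul_ne_zero (mul_ne_zero (mul_ne_zero (pow_ne_zero _ haC) hz0)
        (pow_ne_zero _ h1)) (pow_ne_zero _ h2)
    have hD' : (a : ℂ) ^ 2 * (z + 1) ^ 2 * (z - 1) ^ 2 ≠ 0 :=
      mul_ne_zero (mul_ne_zero (pow_ne_zero _ haC) (pow_ne_zero _ h1)) (pow_ne_zero _ h2)
    simp only [hgdef]
    rw [mul_div_assoc', div_eq_div_iff hD' hD]
    ring
  · have hA : (a : ℂ) + 1 ≠ 0 := by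
      intro h; exact ha2 (by exact_mod_cast (by linear_combination h : (a : ℂ) = -1))
    refine ⟨-(((a : ℂ) + 1) / (a : ℂ) ^ 2),
      neg_ne_zero.mpr (div_ne_zero hA (pow_ne_zero _ haC)), ?_⟩
    set g : ℂ → ℂ := fun z => -(2 * ((a : ℂ) * z ^ 2 + 2 * z + (a : ℂ)))
        / ((a : ℂ) ^ 2 * z * (z + 1) ^ 2) with hgdef
    have hc : ContinuousAt g 1 := by
      apply ContinuousAt.div (by fun_prop) (by fun_prop)
      norm_num [haC]
    have hg : Tendsto g (𝓝[≠] (1 : ℂ)) (𝓝 (g 1)) :=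
      hc.tendsto.mono_left nhdsWithin_le_nhds
    have hval : g 1 = -(((a : ℂ) + 1) / (a : ℂ) ^ 2) := by
      simp only [hgdef]
      norm_num
      field_simp
      ring
    rw [hval] at hg
    refine Tendsto.congr' ?_ hg
    have e1 : ∀ᶠ z : ℂ in 𝓝 (1 : ℂ), z ≠ 0 :=
      continuousAt_id.eventually_ne (by norm_num)
    have e2 : ∀ᶠ z : ℂ in 𝓝 (1 : ℂ), z + 1 ≠ 0 :=
      (continuousAt_id.add continuousAt_const).eventually_ne (by norm_num)
    filter_upwards [self_mem_nhdsWithin, eventually_nhdsWithin_of_eventually_nhds e1,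
      eventually_nhdsWithin_of_eventually_nhds e2] with z hz1 hz0 h2
    have hz1 : z - 1 ≠ 0 := sub_ne_zero.mpr hz1
    have hD : (a : ℂ) ^ 2 * z * (z + 1) ^ 2 * (z - 1) ^ 2 ≠ 0 :=
      mul_ne_zero (mul_ne_zero (mul_ne_zero (pow_ne_zero _ haC) hz0)
        (pow_ne_zero _ h2)) (pow_ne_zero _ hz1)
    have hD' : (a : ℂ) ^ 2 * z * (z + 1) ^ 2 ≠ 0 :=
      mul_ne_zero (mul_ne_zero (pow_ne_zero _ haC) hz0) (pow_ne_zero _ h2)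
    simp only [hgdef]
    rw [mul_div_assoc', div_eq_div_iff hD' hD]
    ring
  · have hA : (a : ℂ) - 1 ≠ 0 := by
      intro h; exact ha1 (by exact_mod_cast sub_eq_zero.mp h)
    refine ⟨((a : ℂ) - 1) / (a : ℂ) ^ 2, div_ne_zero hA (pow_ne_zero _ haC), ?_⟩
    set g : ℂ → ℂ := fun z => -(2 * ((a : ℂ) * z ^ 2 + 2 * z + (a : ℂ)))
        / ((a : ℂ) ^ 2 * z * (z - 1) ^ 2) with hgdef
    have hc : ContinuousAt g (-1) := by
      apply ContinuousAt.div (by fun_prop) (by fun_prop)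
      norm_num [haC]
    have hg : Tendsto g (𝓝[≠] (-1 : ℂ)) (𝓝 (g (-1))) :=
      hc.tendsto.mono_left nhdsWithin_le_nhds
    have hval : g (-1) = ((a : ℂ) - 1) / (a : ℂ) ^ 2 := by
      simp only [hgdef]
      norm_num
      field_simp
      ring
    rw [hval] at hg
    refine Tendsto.congr' ?_ hg
    have e1 : ∀ᶠ z : ℂ in 𝓝 (-1 : ℂ), z ≠ 0 :=
      continuousAt_id.eventually_ne (by norm_num)
    have e2 : ∀ᶠ z : ℂ in 𝓝 (-1 : ℂ), z - 1 ≠ 0 :=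
      (continuousAt_id.sub continuousAt_const).eventually_ne (by norm_num)
    filter_upwards [self_mem_nhdsWithin, eventually_nhdsWithin_of_eventually_nhds e1,
      eventually_nhdsWithin_of_eventually_nhds e2] with z hz2 hz0 h1
    have hz2' : z ≠ -1 := hz2
    have hz2 : z + 1 ≠ 0 := by
      intro h; exact hz2' (by linear_combination h)
    have hD : (a : ℂ) ^ 2 * z * (z + 1) ^ 2 * (z - 1) ^ 2 ≠ 0 :=
      mul_ne_zero (mul_ne_zero (mul_ne_zero (pow_ne_zero _ haC) hz0)
        (pow_ne_zero _ hz2)) (pow_ne_zero _ h1)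
    have hD' : (a : ℂ) ^ 2 * z * (z - 1) ^ 2 ≠ 0 :=
      mul_ne_zero (mul_ne_zero (pow_ne_zero _ haC) hz0) (pow_ne_zero _ h1)
    simp only [hgdef]
    rw [mul_div_assoc', div_eq_div_iff hD' hD]
    ring
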